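/- For every real ι > 0 such that ι/β is not an integer, the crawl value function V is differentiable at ι with derivative V'(ι) = μ̃·α·exp(−αι)·ψ(ι). -/

import Mathlib

open Real Finset

/-- Normalized residual of the `i`-th Taylor approximation of the exponential:
`R_i(x) = (exp x − ∑_{j=0}^{i} x^j/j!) / exp x`. -/
noncomputable def Rres (i : ℕ) (x : ℝ) : ℝ :=
  (Real.exp x - ∑ j ∈ Finset.range (i + 1), x ^ j / (Nat.factorial j : ℝ)) / Real.exp x

/-- Expected crawl-interval length `ψ(ι) = ∑_{i=0}^{⌊ι/β⌋} (1/γ)·R_i(γ(ι − iβ))`. -/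
noncomputable def psi (γ β : ℝ) (ι : ℝ) : ℝ :=
  ∑ i ∈ Finset.range (⌊ι / β⌋₊ + 1), (1 / γ) * Rres i (γ * (ι - (i : ℝ) * β))

/-- Expected cumulative freshness `w(ι) = ∑_{i=0}^{⌊ι/β⌋} (ν^i/(Δ+ν)^{i+1})·R_i((α+γ)(ι − iβ))`. -/
noncomputable def wfun (α β γ ν Δ : ℝ) (ι : ℝ) : ℝ :=
  ∑ i ∈ Finset.range (⌊ι / β⌋₊ + 1),
    (ν ^ i / (Δ + ν) ^ (i + 1)) * Rres i ((α + γ) * (ι - (i : ℝ) * β))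

/-- Crawl value function `V(ι) = μ̃·(w(ι) − exp(−αι)·ψ(ι))`. -/
noncomputable def Vfun (μ α β γ ν Δ : ℝ) (ι : ℝ) : ℝ :=
  μ * (wfun α β γ ν Δ ι - Real.exp (-(α * ι)) * psi γ β ι)

lemma taylorSum_hasDerivAt (i : ℕ) (x : ℝ) :
    HasDerivAt (fun y : ℝ => ∑ j ∈ Finset.range (i + 1), y ^ j / (Nat.factorial j : ℝ))
      (∑ j ∈ Finset.range i, x ^ j / (Nat.factorial j : ℝ)) x := by
  have h : ∀ j ∈ Finset.range (i + 1),
      HasDerivAt (fun y : ℝ => y ^ j / (Nat.factorial j : ℝ))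
        ((j : ℝ) * x ^ (j - 1) / (Nat.factorial j : ℝ)) x := fun j _ =>
    (hasDerivAt_pow j x).div_const _
  have hsum := HasDerivAt.fun_sum h
  convert hsum using 1
  · rfl
  · rfl
  rw [Finset.sum_range_succ']
  simp only [Nat.cast_zero, zero_mul, Nat.factorial_zero, Nat.cast_one, zero_div, add_zero]
  refine Finset.sum_congr rfl fun j _ => ?_
  have : ((j + 1).factorial : ℝ) = (j + 1) * j.factorial := by
    rw [Nat.factorial_succ]; push_cast; ring
  rw [this]
  have h1 : ((j:ℝ) + 1) ≠ 0 := by positivity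
  have h2 : (j.factorial : ℝ) ≠ 0 := by positivity
  field_simp
  rw [Nat.add_sub_cancel]; push_cast; ring

lemma Rres_hasDerivAt (i : ℕ) (x : ℝ) :
    HasDerivAt (Rres i) (Real.exp (-x) * x ^ i / (Nat.factorial i : ℝ)) x := by
  have heq : Rres i = fun y : ℝ =>
      1 - (∑ j ∈ Finset.range (i + 1), y ^ j / (Nat.factorial j : ℝ)) * Real.exp (-y) := by
    funext y
    rw [Rres, Real.exp_neg, sub_div, div_self (Real.exp_ne_zero y), div_eq_mul_inv]
  rw [heq]
  have he : HasDerivAt (fun y : ℝ => Real.exp (-y)) (-Real.exp (-x)) x := by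
    convert (hasDerivAt_neg' x).exp using 1; ring
  have hS := taylorSum_hasDerivAt i x
  have := ((hS.mul he)).const_sub 1
  convert this using 1
  · rfl
  · rfl
  · rfl
  rw [Finset.sum_range_succ]
  field_simp
  ring

lemma term_hasDerivAt (i : ℕ) (k c x : ℝ) :
    HasDerivAt (fun y : ℝ => Rres i (k * (y - c)))
      (Real.exp (-(k * (x - c))) * (k * (x - c)) ^ i / (Nat.factorial i : ℝ) * k) x := by
  have hin : HasDerivAt (fun y : ℝ => k * (y - c)) k x := by
    simpa using ((hasDerivAt_id x).sub_const c).const_mul k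
  exact (Rres_hasDerivAt i (k * (x - c))).comp x hin

/-- For every real `ι > 0` such that `ι/β` is not an integer, the crawl value function `V` is
differentiable at `ι` with derivative `V'(ι) = μ̃·α·exp(−αι)·ψ(ι)`. -/
theorem stmt_9 (μ α β γ ν Δ : ℝ) (hμ : 0 < μ) (hα : 0 < α) (hβ : 0 < β) (hγ : 0 < γ)
    (hν : 0 < ν) (hΔ : 0 < Δ) (hrates : α + γ = Δ + ν) (hnu : ν = γ * Real.exp (-(α * β)))
    (ι : ℝ) (hι : 0 < ι) (hnotint : ∀ k : ℤ, ι / β ≠ (k : ℝ)) :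
    HasDerivAt (Vfun μ α β γ ν Δ) (μ * α * Real.exp (-(α * ι)) * psi γ β ι) ι := by
  set n : ℕ := ⌊ι / β⌋₊ with hn
  -- local constancy of the floor
  have hpos : 0 < ι / β := div_pos hι hβ
  have h1 : (n : ℝ) < ι / β :=
    lt_of_le_of_ne (Nat.floor_le hpos.le) (fun h => hnotint n (by exact_mod_cast h.symm))
  have h2 : ι / β < (n : ℝ) + 1 := Nat.lt_floor_add_one _
  have hfloor : ∀ᶠ x in nhds ι, ⌊x / β⌋₊ = n := by
    have hopen : IsOpen {x : ℝ | (n : ℝ) * β < x ∧ x < ((n : ℝ) + 1) * β} :=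
      isOpen_Ioo (a := (n : ℝ) * β) (b := ((n : ℝ) + 1) * β)
    have hmem : ι ∈ {x : ℝ | (n : ℝ) * β < x ∧ x < ((n : ℝ) + 1) * β} := by
      constructor
      · calc (n : ℝ) * β < (ι / β) * β := by exact mul_lt_mul_of_pos_right h1 hβ
          _ = ι := div_mul_cancel₀ ι hβ.ne'
      · calc ι = (ι / β) * β := (div_mul_cancel₀ ι hβ.ne').symm
          _ < ((n : ℝ) + 1) * β := mul_lt_mul_of_pos_right h2 hβ
    filter_upwards [hopen.mem_nhds hmem] with x hx
    have hx1 : (n : ℝ) ≤ x / β := le_of_lt ((lt_div_iff₀ hβ).2 hx.1)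
    have hx2 : x / β < (n : ℝ) + 1 := (div_lt_iff₀ hβ).2 hx.2
    have hx0 : 0 ≤ x / β := le_trans (by positivity) hx1
    exact (Nat.floor_eq_iff hx0).2 ⟨hx1, by exact_mod_cast hx2⟩
  -- the local representation of V
  set g : ℝ → ℝ := fun x => μ *
    ((∑ i ∈ Finset.range (n + 1),
        (ν ^ i / (Δ + ν) ^ (i + 1)) * Rres i ((α + γ) * (x - (i : ℝ) * β))) -
      Real.exp (-(α * x)) *
        ∑ i ∈ Finset.range (n + 1), (1 / γ) * Rres i (γ * (x - (i : ℝ) * β))) with hg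
  have hVg : Vfun μ α β γ ν Δ =ᶠ[nhds ι] g := by
    filter_upwards [hfloor] with x hx
    simp only [Vfun, wfun, psi, hx, hg]
  -- derivatives of the pieces
  have Hw : HasDerivAt (fun x : ℝ => ∑ i ∈ Finset.range (n + 1),
      (ν ^ i / (Δ + ν) ^ (i + 1)) * Rres i ((α + γ) * (x - (i : ℝ) * β)))
      (∑ i ∈ Finset.range (n + 1), (ν ^ i / (Δ + ν) ^ (i + 1)) *
        (Real.exp (-((α + γ) * (ι - (i : ℝ) * β))) * ((α + γ) * (ι - (i : ℝ) * β)) ^ i /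
          (Nat.factorial i : ℝ) * (α + γ))) ι :=
    HasDerivAt.fun_sum fun i _ => (term_hasDerivAt i (α + γ) ((i : ℝ) * β) ι).const_mul _
  have Hp : HasDerivAt (fun x : ℝ => ∑ i ∈ Finset.range (n + 1),
      (1 / γ) * Rres i (γ * (x - (i : ℝ) * β)))
      (∑ i ∈ Finset.range (n + 1), (1 / γ) *
        (Real.exp (-(γ * (ι - (i : ℝ) * β))) * (γ * (ι - (i : ℝ) * β)) ^ i /
          (Nat.factorial i : ℝ) * γ)) ι :=
    HasDerivAt.fun_sum fun i _ => (term_hasDerivAt i γ ((i : ℝ) * β) ι).const_mul _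
  have He : HasDerivAt (fun x : ℝ => Real.exp (-(α * x))) (Real.exp (-(α * ι)) * (-α)) ι := by
    exact (Real.hasDerivAt_exp _).comp ι (by convert (((hasDerivAt_id' ι).const_mul α).neg) using 1; rfl; rfl; ring)
  have Hg : HasDerivAt g
      (μ * ((∑ i ∈ Finset.range (n + 1), (ν ^ i / (Δ + ν) ^ (i + 1)) *
          (Real.exp (-((α + γ) * (ι - (i : ℝ) * β))) * ((α + γ) * (ι - (i : ℝ) * β)) ^ i /
            (Nat.factorial i : ℝ) * (α + γ))) -
        (Real.exp (-(α * ι)) * (-α) *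
            (∑ i ∈ Finset.range (n + 1), (1 / γ) * Rres i (γ * (ι - (i : ℝ) * β))) +
          Real.exp (-(α * ι)) *
            ∑ i ∈ Finset.range (n + 1), (1 / γ) *
              (Real.exp (-(γ * (ι - (i : ℝ) * β))) * (γ * (ι - (i : ℝ) * β)) ^ i /
                (Nat.factorial i : ℝ) * γ)))) ι :=
    (Hw.sub (He.mul Hp)).const_mul μ
  -- key termwise cancellation W = e^{-αι} Ψ'
  have hcancel : (∑ i ∈ Finset.range (n + 1), (ν ^ i / (Δ + ν) ^ (i + 1)) *
      (Real.exp (-((α + γ) * (ι - (i : ℝ) * β))) * ((α + γ) * (ι - (i : ℝ) * β)) ^ i /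
        (Nat.factorial i : ℝ) * (α + γ))) =
      Real.exp (-(α * ι)) * ∑ i ∈ Finset.range (n + 1), (1 / γ) *
        (Real.exp (-(γ * (ι - (i : ℝ) * β))) * (γ * (ι - (i : ℝ) * β)) ^ i /
          (Nat.factorial i : ℝ) * γ) := by
    rw [Finset.mul_sum]
    refine Finset.sum_congr rfl fun i _ => ?_
    rw [← hrates, hnu]
    have hE : (Real.exp (-(α * β))) ^ i * Real.exp (-((α + γ) * (ι - (i : ℝ) * β))) =
        Real.exp (-(α * ι)) * Real.exp (-(γ * (ι - (i : ℝ) * β))) := by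
      rw [← Real.exp_nat_mul, ← Real.exp_add, ← Real.exp_add]
      congr 1; ring
    have hfac : (Nat.factorial i : ℝ) ≠ 0 := by positivity
    have hag : (α + γ) ≠ 0 := by positivity
    rw [mul_pow, mul_pow, mul_pow, pow_succ]
    field_simp
    rw [mul_comm β (i : ℝ)]
    linear_combination (ι - (i : ℝ) * β) ^ i * hE
  have Hfinal : HasDerivAt g (μ * α * Real.exp (-(α * ι)) * psi γ β ι) ι := by
    convert Hg using 1
    rw [hcancel]
    simp only [psi, ← hn]
    ring
  exact Hfinal.congr_of_eventuallyEq hVg
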